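/- Let G be a graph and c : E(G) → {red, blue} a surjective edge colouring. Then c is a NAC-colouring (i.e., no cycle of G contains exactly one red edge or exactly one blue edge) if and only if every monochromatic component of c (a connected component of the subgraph spanned by the edges of one colour) is an induced subgraph of G. -/

import Mathlib

open scoped Classical

namespace NAC

variable {V : Type*}

/-- Number of edges of `G` in the list `l` whose colour under `c` is `b`. -/
noncomputable def cCount (G : SimpleGraph V) (c : G.edgeSet → Bool) (b : Bool)
    (l : List (Sym2 V)) : ℕ :=
  (l.filter fun e => decide (∃ h : e ∈ G.edgeSet, c ⟨e, h⟩ = b)).length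

/-- `c` is a NAC-colouring of `G`: it is surjective (both colours are used) and no
cycle of `G` contains exactly one edge of either colour. -/
def IsNAC (G : SimpleGraph V) (c : G.edgeSet → Bool) : Prop :=
  Function.Surjective c ∧
  ∀ ⦃u : V⦄ (w : G.Walk u u), w.IsCycle →
    cCount G c true w.edges ≠ 1 ∧ cCount G c false w.edges ≠ 1

/-- The number of NAC-colourings of `G`, divided by two. -/
noncomputable def nacNum (G : SimpleGraph V) : ℕ :=
  {c : G.edgeSet → Bool | IsNAC G c}.ncard / 2

end NAC

namespace NAC

/-- The spanning subgraph of `G` consisting of the edges coloured `b` by `c`. -/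
def monoSub (G : SimpleGraph V) (c : G.edgeSet → Bool) (b : Bool) : SimpleGraph V where
  Adj u v := ∃ h : G.Adj u v, c ⟨s(u, v), G.mem_edgeSet.mpr h⟩ = b
  symm := by
    constructor
    rintro u v ⟨h, hc⟩
    refine ⟨h.symm, ?_⟩
    have : (⟨s(v, u), G.mem_edgeSet.mpr h.symm⟩ : G.edgeSet)
        = ⟨s(u, v), G.mem_edgeSet.mpr h⟩ := Subtype.ext Sym2.eq_swap
    rw [this]; exact hc
  loopless := by constructor; rintro u ⟨h, -⟩; exact G.irrefl h

variable {V : Type*}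

lemma cCount_cons (G : SimpleGraph V) (c : G.edgeSet → Bool) (b : Bool)
    (e : Sym2 V) (l : List (Sym2 V)) :
    cCount G c b (e :: l) =
      (if ∃ h : e ∈ G.edgeSet, c ⟨e, h⟩ = b then 1 else 0) + cCount G c b l := by
  unfold cCount
  rw [List.filter_cons]
  split_ifs with h1 h2 h2 <;> simp_all <;> omega

lemma monoSub_le (G : SimpleGraph V) (c : G.edgeSet → Bool) (b : Bool) :
    monoSub G c b ≤ G := by
  rintro u v ⟨h, -⟩; exact h

/-- If a walk has no edge of colour `b`, its endpoints are reachable in `monoSub (!b)`. -/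
lemma reach_of_cCount_zero {G : SimpleGraph V} {c : G.edgeSet → Bool} {b : Bool}
    {x y : V} (w : G.Walk x y) (h : cCount G c b w.edges = 0) :
    (monoSub G c (!b)).Reachable x y := by
  induction w with
  | nil => exact SimpleGraph.Reachable.refl _
  | @cons u v z ha p ih =>
    rw [SimpleGraph.Walk.edges_cons, cCount_cons] at h
    by_cases hh : ∃ h' : s(u, v) ∈ G.edgeSet, c ⟨s(u, v), h'⟩ = b
    · rw [if_pos hh] at h; omega
    · rw [if_neg hh] at h
      have h2 : cCount G c b p.edges = 0 := by omega
      have hne : c ⟨s(u, v), G.mem_edgeSet.mpr ha⟩ ≠ b := by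
        intro hx; exact hh ⟨G.mem_edgeSet.mpr ha, hx⟩
      have hcol : c ⟨s(u, v), G.mem_edgeSet.mpr ha⟩ = !b := by
        cases hcv : c ⟨s(u, v), G.mem_edgeSet.mpr ha⟩ <;> cases b <;> simp_all
      exact ((show (monoSub G c (!b)).Adj u v from ⟨ha, hcol⟩).reachable).trans (ih h2)

/-- If a walk has exactly one edge of colour `b`, it decomposes around that edge. -/
lemma decomp_of_cCount_one {G : SimpleGraph V} {c : G.edgeSet → Bool} {b : Bool}
    {x y : V} (w : G.Walk x y) (h : cCount G c b w.edges = 1) :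
    ∃ (p q : V) (ha : G.Adj p q), c ⟨s(p, q), G.mem_edgeSet.mpr ha⟩ = b ∧
      (monoSub G c (!b)).Reachable x p ∧ (monoSub G c (!b)).Reachable q y := by
  induction w with
  | nil => simp [cCount] at h
  | @cons u v z ha p ih =>
    rw [SimpleGraph.Walk.edges_cons, cCount_cons] at h
    split_ifs at h with hh
    · obtain ⟨hm, hcol⟩ := hh
      have h2 : cCount G c b p.edges = 0 := by omega
      exact ⟨u, v, ha, hcol, SimpleGraph.Reachable.refl _, reach_of_cCount_zero p h2⟩
    · have h2 : cCount G c b p.edges = 1 := by omega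
      obtain ⟨p', q', ha', hcol', hr1, hr2⟩ := ih h2
      have hne : c ⟨s(u, v), G.mem_edgeSet.mpr ha⟩ ≠ b := by
        intro hx; exact hh ⟨G.mem_edgeSet.mpr ha, hx⟩
      have hcol : c ⟨s(u, v), G.mem_edgeSet.mpr ha⟩ = !b := by
        cases hcv : c ⟨s(u, v), G.mem_edgeSet.mpr ha⟩ <;> cases b <;> simp_all
      exact ⟨p', q', ha', hcol',
        ((show (monoSub G c (!b)).Adj u v from ⟨ha, hcol⟩).reachable).trans hr1, hr2⟩

end NAC

open NAC in
/-- A surjective edge colouring is a NAC-colouring iff every monochromatic component is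
an induced subgraph of `G`. -/
theorem statement0 {V : Type*} (G : SimpleGraph V) (c : G.edgeSet → Bool)
    (hc : Function.Surjective c) :
    IsNAC G c ↔
      ∀ (b : Bool) (u v : V), (monoSub G c b).Reachable u v → G.Adj u v →
        (monoSub G c b).Adj u v := by
  constructor
  · rintro ⟨-, hnac⟩ b u v hreach hadj
    by_contra hnadj
    -- colour of the edge u v is !b
    have hcol : c ⟨s(u, v), G.mem_edgeSet.mpr hadj⟩ = !b := by
      have hne : c ⟨s(u, v), G.mem_edgeSet.mpr hadj⟩ ≠ b := fun hx => hnadj ⟨hadj, hx⟩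
      cases hcv : c ⟨s(u, v), G.mem_edgeSet.mpr hadj⟩ <;> cases b <;> simp_all
    -- get a path in monoSub b from u to v
    obtain ⟨w0⟩ := hreach
    set P : (monoSub G c b).Path u v := w0.toPath with hP
    have hPedges : ∀ e ∈ (P : (monoSub G c b).Walk u v).edges, e ∈ G.edgeSet :=
      fun e he => SimpleGraph.edgeSet_mono (monoSub_le G c b)
        ((P : (monoSub G c b).Walk u v).edges_subset_edgeSet he)
    set w : G.Walk u v := (P : (monoSub G c b).Walk u v).transfer G hPedges with hw
    have hwedges : w.edges = (P : (monoSub G c b).Walk u v).edges :=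
      SimpleGraph.Walk.edges_transfer _ hPedges
    have hwpath : w.IsPath := P.2.transfer hPedges
    have hnotmem : s(v, u) ∉ w.edges := by
      rw [hwedges]
      intro hmem
      have : s(v, u) ∈ (monoSub G c b).edgeSet :=
        (P : (monoSub G c b).Walk u v).edges_subset_edgeSet hmem
      exact hnadj (((monoSub G c b).mem_edgeSet.mp this).symm)
    have hcyc : (SimpleGraph.Walk.cons hadj.symm w).IsCycle :=
      SimpleGraph.Path.cons_isCycle ⟨w, hwpath⟩ hadj.symm hnotmem
    -- count edges of colour !b on the cycle: exactly one
    have hzero : cCount G c (!b) w.edges = 0 := by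
      unfold cCount
      rw [List.length_eq_zero_iff, List.filter_eq_nil_iff]
      intro e he
      rw [hwedges] at he
      have heb : e ∈ (monoSub G c b).edgeSet :=
        (P : (monoSub G c b).Walk u v).edges_subset_edgeSet he
      simp only [decide_eq_true_eq]
      rintro ⟨hG, hce⟩
      induction e with
      | h p q =>
        obtain ⟨hpq, hcolb⟩ := (monoSub G c b).mem_edgeSet.mp heb
        rw [hcolb] at hce
        exact (Bool.eq_not_self b).mp hce
    have hone : cCount G c (!b) (SimpleGraph.Walk.cons hadj.symm w).edges = 1 := by
      rw [SimpleGraph.Walk.edges_cons, cCount_cons, hzero]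
      have : (⟨s(v, u), G.mem_edgeSet.mpr hadj.symm⟩ : G.edgeSet)
          = ⟨s(u, v), G.mem_edgeSet.mpr hadj⟩ := Subtype.ext Sym2.eq_swap
      rw [if_pos ⟨G.mem_edgeSet.mpr hadj.symm, by rw [this]; exact hcol⟩]
    have := hnac (SimpleGraph.Walk.cons hadj.symm w) hcyc
    cases b with
    | true => exact this.2 hone
    | false => exact this.1 hone
  · intro hind
    refine ⟨hc, ?_⟩
    intro u w hcyc
    constructor <;> intro hone <;>
    · obtain ⟨p, q, ha, hcol, hr1, hr2⟩ := decomp_of_cCount_one w hone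
      have hreach : (monoSub G c _).Reachable p q := (hr2.trans hr1).symm
      have := hind _ p q hreach ha
      obtain ⟨ha2, hcol'⟩ := this
      rw [hcol] at hcol'
      exact (Bool.eq_not_self _).mp hcol'.symm
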